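/- Let G be any group and define a ⊙ b = a²ba⁻¹. Then the left gyroassociative law holds with gyr[a,b] equal to conjugation by ⁅a,b⁻¹⁆: for all a,b,c ∈ G, a ⊙ (b ⊙ c) = (a ⊙ b) ⊙ (⁅a,b⁻¹⁆ · c · ⁅a,b⁻¹⁆⁻¹); explicitly, a²·(b²cb⁻¹)·a⁻¹ = (a²ba⁻¹)² · (⁅a,b⁻¹⁆ c ⁅a,b⁻¹⁆⁻¹) · (a²ba⁻¹)⁻¹. -/

import Mathlib

open scoped commutatorElement

/-- In any group, with `a ⊙ b = a² b a⁻¹`, the left gyroassociative law holds with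
`gyr[a,b]` equal to conjugation by `⁅a, b⁻¹⁆`. -/
theorem left_gyroassociative_law (G : Type*) [Group G] (a b c : G) :
    a ^ 2 * (b ^ 2 * c * b⁻¹) * a⁻¹ =
      (a ^ 2 * b * a⁻¹) ^ 2 * (⁅a, b⁻¹⁆ * c * ⁅a, b⁻¹⁆⁻¹) * (a ^ 2 * b * a⁻¹)⁻¹ := by
  simp only [commutatorElement_def, pow_two, mul_pow, mul_assoc, mul_inv_rev]
  group
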